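/- Let A be a Hurwitz block-partitioned real matrix with blocks A_{ij} ∈ ℝ^{k_i×k_j} such that each A_{ii} is Hurwitz and ‖(sI − A_{ii})^{−1}‖_{H∞} = ‖A_{ii}^{−1}‖₂. If the block comparison matrix M^α(A), defined by M^α(A)_{ii} = ‖A_{ii}^{−1}‖₂^{−1} and M^α(A)_{ij} = −‖A_{ij}‖₂ for i≠j, admits a strictly positive vector d with M^α(A) d ≫ 0, then A is Hurwitz. -/

import Mathlib

open Matrix

/-- The spectral (ℓ²→ℓ²) operator norm of a complex matrix. -/
noncomputable def specNorm {m n : Type*} [Fintype m] [Fintype n] [DecidableEq n]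
    (B : Matrix m n ℂ) : ℝ :=
  ‖LinearMap.toContinuousLinearMap (Matrix.toEuclideanLin B)‖

/-- The H∞ norm of a (stable) matrix-valued transfer function `K`,
`‖K‖_{H∞} = sup_{ω ∈ ℝ} ‖K(jω)‖₂`. -/
noncomputable def hinfNorm {m n : Type*} [Fintype m] [Fintype n] [DecidableEq n]
    (K : ℝ → Matrix m n ℂ) : ℝ :=
  ⨆ ω : ℝ, specNorm (K ω)

/-- A real square matrix is Hurwitz if all of its (complex) eigenvalues have
negative real part. -/
def IsHurwitz {m : Type*} [Fintype m] [DecidableEq m] (A : Matrix m m ℝ) : Prop :=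
  ∀ μ ∈ spectrum ℂ (A.map (algebraMap ℝ ℂ)), μ.re < 0

section Aux

variable {m n : Type*} [Fintype m] [Fintype n] [DecidableEq n]

/-- Euclidean (ℓ²) norm of a finitely supported tuple. -/
noncomputable def eunorm {n : Type*} [Fintype n] (x : n → ℂ) : ℝ :=
  ‖(WithLp.linearEquiv 2 ℂ (n → ℂ)).symm x‖

lemma eunorm_nonneg (x : n → ℂ) : 0 ≤ eunorm x := norm_nonneg _

lemma eunorm_pos {x : n → ℂ} (hx : x ≠ 0) : 0 < eunorm x := by
  rw [eunorm, norm_pos_iff]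
  simpa using hx

lemma eunorm_smul (c : ℂ) (x : n → ℂ) : eunorm (c • x) = ‖c‖ * eunorm x := by
  rw [eunorm, _root_.map_smul, norm_smul, eunorm]

lemma eunorm_sum_le {ι : Type*} (t : Finset ι) (f : ι → n → ℂ) :
    eunorm (∑ j ∈ t, f j) ≤ ∑ j ∈ t, eunorm (f j) := by
  rw [eunorm, map_sum]
  exact norm_sum_le _ _

lemma eunorm_mulVec_le (B : Matrix m n ℂ) (x : n → ℂ) :
    eunorm (B *ᵥ x) ≤ specNorm B * eunorm x := by
  have h : (WithLp.linearEquiv 2 ℂ (m → ℂ)).symm (B *ᵥ x)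
      = (LinearMap.toContinuousLinearMap (Matrix.toEuclideanLin B))
          ((WithLp.linearEquiv 2 ℂ (n → ℂ)).symm x) := rfl
  rw [eunorm, h]
  exact (LinearMap.toContinuousLinearMap (Matrix.toEuclideanLin B)).le_opNorm _

lemma specNorm_nonneg (B : Matrix m n ℂ) : 0 ≤ specNorm B := norm_nonneg _

lemma specNorm_le_bound (B : Matrix m n ℂ) {C : ℝ} (hC : 0 ≤ C)
    (h : ∀ x : n → ℂ, eunorm (B *ᵥ x) ≤ C * eunorm x) : specNorm B ≤ C := by
  refine ContinuousLinearMap.opNorm_le_bound _ hC fun y => ?_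
  have hy : y = (WithLp.linearEquiv 2 ℂ (n → ℂ)).symm ((WithLp.linearEquiv 2 ℂ (n → ℂ)) y) := by
    simp
  calc ‖(LinearMap.toContinuousLinearMap (Matrix.toEuclideanLin B)) y‖
      = eunorm (B *ᵥ ((WithLp.linearEquiv 2 ℂ (n → ℂ)) y)) := by rw [eunorm]; congr 1
    _ ≤ C * eunorm ((WithLp.linearEquiv 2 ℂ (n → ℂ)) y) := h _
    _ = C * ‖y‖ := by rw [eunorm]; simp

end Aux

section Diff

variable {n : Type*} [Fintype n] [DecidableEq n]

lemma differentiable_det_comp {N : ℂ → Matrix n n ℂ}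
    (h : ∀ i j, Differentiable ℂ fun s => N s i j) :
    Differentiable ℂ fun s => (N s).det := by
  have : (fun s => (N s).det)
      = fun s => ∑ σ : Equiv.Perm n, (Equiv.Perm.sign σ : ℂ) * ∏ i, N s (σ i) i := by
    funext s
    rw [Matrix.det_apply]
    simp [Units.smul_def, zsmul_eq_mul]
  rw [this]
  refine Differentiable.fun_sum fun σ _ => Differentiable.const_mul ?_ _
  intro s
  exact DifferentiableAt.fun_finsetProd fun i _ => h (σ i) i s

lemma differentiable_affine_entries (M : Matrix n n ℂ) (i j : n) :
    Differentiable ℂ fun s : ℂ => (s • (1 : Matrix n n ℂ) - M) i j := by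
  have : (fun s : ℂ => (s • (1 : Matrix n n ℂ) - M) i j)
      = fun s : ℂ => s * (1 : Matrix n n ℂ) i j - M i j := by
    funext s; simp [Matrix.sub_apply, Matrix.smul_apply, smul_eq_mul]
  rw [this]
  exact (differentiable_id.mul_const _).sub_const _

lemma differentiable_det_affine (M : Matrix n n ℂ) :
    Differentiable ℂ fun s : ℂ => (s • (1 : Matrix n n ℂ) - M).det :=
  differentiable_det_comp (differentiable_affine_entries M)

lemma differentiable_adjugate_entry (M : Matrix n n ℂ) (i j : n) :
    Differentiable ℂ fun s : ℂ => (s • (1 : Matrix n n ℂ) - M).adjugate i j := by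
  have : (fun s : ℂ => (s • (1 : Matrix n n ℂ) - M).adjugate i j)
      = fun s : ℂ => ((s • (1 : Matrix n n ℂ) - M).updateRow j (Pi.single i 1)).det := by
    funext s; rw [Matrix.adjugate_apply]
  rw [this]
  refine differentiable_det_comp fun a b => ?_
  by_cases ha : a = j
  · subst ha
    simp only [Matrix.updateRow_self]
    exact differentiable_const _
  · simp only [Matrix.updateRow_ne ha]
    exact differentiable_affine_entries M a b

/-- The resolvent-type map as a continuous linear map on Euclidean space. -/
noncomputable def resCLM (M : Matrix n n ℂ) (s : ℂ) :
    EuclideanSpace ℂ n →L[ℂ] EuclideanSpace ℂ n :=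
  LinearMap.toContinuousLinearMap (Matrix.toEuclideanLin ((s • (1 : Matrix n n ℂ) - M)⁻¹))

lemma norm_resCLM (M : Matrix n n ℂ) (s : ℂ) :
    ‖resCLM M s‖ = specNorm ((s • (1 : Matrix n n ℂ) - M)⁻¹) := rfl

/-- `resCLM` is differentiable wherever the determinant is nonzero. -/
lemma differentiableAt_resCLM (M : Matrix n n ℂ) {s₀ : ℂ}
    (h : (s₀ • (1 : Matrix n n ℂ) - M).det ≠ 0) :
    DifferentiableAt ℂ (resCLM M) s₀ := by
  classical
  set L : Matrix n n ℂ →ₗ[ℂ]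
      (EuclideanSpace ℂ n →L[ℂ] EuclideanSpace ℂ n) :=
    LinearMap.toContinuousLinearMap.toLinearMap.comp
      (Matrix.toEuclideanLin (𝕜 := ℂ) (m := n) (n := n)).toLinearMap with hL
  have key : resCLM M = fun s =>
      ((s • (1 : Matrix n n ℂ) - M).det)⁻¹ •
        ∑ p : n × n, ((s • (1 : Matrix n n ℂ) - M).adjugate p.1 p.2) •
          L (Matrix.single p.1 p.2 1) := by
    funext s
    have hadj : (s • (1 : Matrix n n ℂ) - M).adjugate
        = ∑ p : n × n, ((s • (1 : Matrix n n ℂ) - M).adjugate p.1 p.2) •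
            Matrix.single p.1 p.2 1 := by
      set A' := (s • (1 : Matrix n n ℂ) - M).adjugate with hA'
      ext a b
      simp only [Matrix.sum_apply, Matrix.smul_apply, smul_eq_mul]
      rw [Finset.sum_eq_single ((a, b) : n × n)]
      · simp [Matrix.single]
      · intro p _ hp
        have : ¬(p.1 = a ∧ p.2 = b) := by
          intro hcon
          exact hp (Prod.ext hcon.1 hcon.2)
        simp only [Matrix.single, Matrix.of_apply]
        rw [if_neg this, mul_zero]
      · intro hmem
        exact absurd (Finset.mem_univ _) hmem
    have hinv : (s • (1 : Matrix n n ℂ) - M)⁻¹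
        = ((s • (1 : Matrix n n ℂ) - M).det)⁻¹ • (s • (1 : Matrix n n ℂ) - M).adjugate := by
      rw [Matrix.inv_def, Ring.inverse_eq_inv]
    rw [resCLM]
    have : LinearMap.toContinuousLinearMap
        (Matrix.toEuclideanLin ((s • (1 : Matrix n n ℂ) - M)⁻¹))
        = L ((s • (1 : Matrix n n ℂ) - M)⁻¹) := rfl
    rw [this, hinv, _root_.map_smul]
    congr 1
    conv_lhs => rw [hadj]
    rw [map_sum]
    refine Finset.sum_congr rfl fun p _ => ?_
    rw [_root_.map_smul]
  rw [key]
  refine DifferentiableAt.fun_smul ?_ ?_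
  · exact ((differentiable_det_affine M) s₀).inv h
  · exact DifferentiableAt.fun_sum fun p _ =>
      ((differentiable_adjugate_entry M p.1 p.2) s₀).smul_const _

end Diff

section Resolvent

variable {n : Type*} [Fintype n] [DecidableEq n]

/-- Lower bound: `‖(s•1 - M) x‖ ≥ (‖s‖ - ‖M‖) ‖x‖`. -/
lemma mulVec_lower (M : Matrix n n ℂ) (s : ℂ) (x : n → ℂ) :
    (‖s‖ - specNorm M) * eunorm x ≤ eunorm ((s • (1 : Matrix n n ℂ) - M) *ᵥ x) := by
  have h1 : (s • (1 : Matrix n n ℂ) - M) *ᵥ x = s • x - M *ᵥ x := by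
    rw [Matrix.sub_mulVec, Matrix.smul_mulVec, Matrix.one_mulVec]
  rw [h1]
  have h2 : eunorm (s • x) - eunorm (M *ᵥ x) ≤ eunorm (s • x - M *ᵥ x) := by
    rw [eunorm, eunorm, eunorm, map_sub]
    exact norm_sub_norm_le _ _
  have h3 : eunorm (s • x) = ‖s‖ * eunorm x := eunorm_smul s x
  have h4 : eunorm (M *ᵥ x) ≤ specNorm M * eunorm x := eunorm_mulVec_le M x
  nlinarith [eunorm_nonneg x]

lemma specNorm_inv_le (M : Matrix n n ℂ) {s : ℂ}
    (hdet : (s • (1 : Matrix n n ℂ) - M).det ≠ 0)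
    (hs : specNorm M < ‖s‖) :
    specNorm ((s • (1 : Matrix n n ℂ) - M)⁻¹) ≤ (‖s‖ - specNorm M)⁻¹ := by
  set B := s • (1 : Matrix n n ℂ) - M with hB
  have hu : IsUnit B.det := isUnit_iff_ne_zero.2 hdet
  have hpos : (0:ℝ) < ‖s‖ - specNorm M := by linarith
  refine specNorm_le_bound _ (le_of_lt (inv_pos.2 hpos)) fun y => ?_
  have key : (‖s‖ - specNorm M) * eunorm (B⁻¹ *ᵥ y) ≤ eunorm y := by
    have h1 : B *ᵥ (B⁻¹ *ᵥ y) = y := by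
      rw [Matrix.mulVec_mulVec, Matrix.mul_nonsing_inv _ hu, Matrix.one_mulVec]
    have := mulVec_lower M s (B⁻¹ *ᵥ y)
    rw [← hB, h1] at this
    exact this
  rw [inv_mul_eq_div, le_div_iff₀ hpos, mul_comm]
  exact key

/-- The maximum-modulus step: the resolvent norm on the closed right half plane
is bounded by its supremum over the imaginary axis, provided the latter equals
`specNorm M⁻¹`. -/
lemma resolvent_bound (M : Matrix n n ℂ)
    (hstab : ∀ s : ℂ, 0 ≤ s.re → (s • (1 : Matrix n n ℂ) - M).det ≠ 0)
    (hpos : 0 < specNorm M⁻¹)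
    (hpeak : (⨆ ω : ℝ, specNorm ((((ω : ℂ) * Complex.I) • (1 : Matrix n n ℂ) - M)⁻¹))
      = specNorm M⁻¹)
    {μ : ℂ} (hμ : 0 ≤ μ.re) :
    specNorm ((μ • (1 : Matrix n n ℂ) - M)⁻¹) ≤ specNorm M⁻¹ := by
  classical
  set S := specNorm M with hS
  set sn := specNorm M⁻¹ with hsn
  -- continuity of the resolvent along the imaginary axis
  have hdiff : ∀ s : ℂ, 0 ≤ s.re → DifferentiableAt ℂ (resCLM M) s :=
    fun s hs => differentiableAt_resCLM M (hstab s hs)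
  have hg : Continuous fun ω : ℝ => ‖resCLM M ((ω : ℂ) * Complex.I)‖ := by
    have h1 : Continuous fun ω : ℝ => ((ω : ℂ) * Complex.I) :=
      (Complex.continuous_ofReal.mul continuous_const)
    refine Continuous.norm (continuous_iff_continuousAt.2 fun ω => ?_)
    exact ((hdiff _ (by simp)).continuousAt.comp h1.continuousAt)
  -- the supremum over the imaginary axis is bounded above
  obtain ⟨ω₀, -, hω₀⟩ := (isCompact_Icc (a := -(S+1)) (b := S+1)).exists_isMaxOn
    ⟨0, by constructor <;> nlinarith [specNorm_nonneg M]⟩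
    (hg.continuousOn)
  set C : ℝ := max (‖resCLM M ((ω₀ : ℂ) * Complex.I)‖) 1 with hC
  have hbound : ∀ ω : ℝ, ‖resCLM M ((ω : ℂ) * Complex.I)‖ ≤ C := by
    intro ω
    by_cases hcase : |ω| ≤ S + 1
    · exact le_trans (hω₀ (abs_le.1 hcase)) (le_max_left _ _)
    · push_neg at hcase
      have hnorm : ‖((ω : ℂ) * Complex.I)‖ = |ω| := by
        simp [Complex.norm_real]
      have hSlt : S < ‖((ω : ℂ) * Complex.I)‖ := by
        rw [hnorm]; nlinarith
      have hdet := hstab ((ω : ℂ) * Complex.I) (by simp)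
      have := specNorm_inv_le M hdet hSlt
      rw [norm_resCLM]
      refine le_trans this (le_trans ?_ (le_max_right _ _))
      rw [hnorm]
      rw [inv_le_one_iff₀]
      right; linarith
  have hbdd : BddAbove (Set.range fun ω : ℝ =>
      specNorm ((((ω : ℂ) * Complex.I) • (1 : Matrix n n ℂ) - M)⁻¹)) := by
    refine ⟨C, fun x hx => ?_⟩
    obtain ⟨ω, rfl⟩ := hx
    exact hbound ω
  have haxis : ∀ ω : ℝ,
      specNorm ((((ω : ℂ) * Complex.I) • (1 : Matrix n n ℂ) - M)⁻¹) ≤ sn := by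
    intro ω
    rw [← hpeak]
    exact le_ciSup hbdd ω
  -- case split on μ.re
  rcases eq_or_lt_of_le hμ with hre | hre
  · -- purely imaginary: μ = μ.im * I
    have hμeq : μ = (μ.im : ℂ) * Complex.I := by
      apply Complex.ext <;> simp [← hre]
    rw [hμeq]
    exact haxis μ.im
  · -- strictly inside: maximum modulus on a half-disk
    set R : ℝ := max (‖μ‖ + 1) (S + 1 + sn⁻¹) with hR
    have hRS : S + 1 + sn⁻¹ ≤ R := le_max_right _ _
    have hRμ : ‖μ‖ + 1 ≤ R := le_max_left _ _
    set U : Set ℂ := {z : ℂ | 0 < z.re} ∩ Metric.ball 0 R with hU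
    have hUb : Bornology.IsBounded U :=
      Metric.isBounded_ball.subset Set.inter_subset_right
    have hclos : closure U ⊆ {z : ℂ | 0 ≤ z.re} ∩ Metric.closedBall 0 R := by
      refine subset_trans (closure_inter_subset_inter_closure _ _) ?_
      have hR0 : R ≠ 0 := ne_of_gt (lt_of_lt_of_le (by positivity) hRμ)
      refine Set.inter_subset_inter ?_ ?_
      · refine closure_minimal ?_ ?_
        · intro z hz
          show 0 ≤ z.re
          exact le_of_lt hz
        · exact isClosed_le continuous_const Complex.continuous_re
      · rw [closure_ball 0 hR0]
    have hdiffcl : DiffContOnCl ℂ (resCLM M) U := by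
      constructor
      · exact fun z hz => (hdiff z (le_of_lt hz.1)).differentiableWithinAt
      · exact fun z hz => ((hdiff z (hclos hz).1).continuousAt).continuousWithinAt
    have hfront : ∀ z ∈ frontier U, ‖resCLM M z‖ ≤ sn := by
      intro z hz
      have hzc : z ∈ closure U := frontier_subset_closure hz
      have hzre : 0 ≤ z.re := (hclos hzc).1
      have hznorm : ‖z‖ ≤ R := by
        have := (hclos hzc).2
        rwa [Metric.mem_closedBall, dist_zero_right] at this
      have hznotin : z ∉ U := by
        intro hzin
        have : z ∈ interior U := by
          rw [interior_eq_iff_isOpen.2 ?_]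
          · exact hzin
          · exact (isOpen_lt continuous_const Complex.continuous_re).inter Metric.isOpen_ball
        exact hz.2 this
      by_cases hcase : z.re = 0
      · have hzeq : z = (z.im : ℂ) * Complex.I := by
          apply Complex.ext <;> simp [hcase]
        rw [norm_resCLM, hzeq]
        exact haxis z.im
      · -- then ‖z‖ = R ≥ S + 1 + sn⁻¹
        have hzre' : 0 < z.re := lt_of_le_of_ne hzre (Ne.symm hcase)
        have hznR : R ≤ ‖z‖ := by
          by_contra hlt
          push_neg at hlt
          exact hznotin ⟨hzre', by rwa [Metric.mem_ball, dist_zero_right]⟩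
        have hzR : ‖z‖ = R := le_antisymm hznorm hznR
        have hSz : S < ‖z‖ := by
          rw [hzR]
          have : (0:ℝ) < sn⁻¹ := inv_pos.2 hpos
          linarith
        have hdet := hstab z hzre
        rw [norm_resCLM]
        refine le_trans (specNorm_inv_le M hdet hSz) ?_
        rw [inv_le_comm₀ (by linarith) hpos]
        rw [hzR]
        linarith
    have hμU : μ ∈ closure U := by
      refine subset_closure ⟨hre, ?_⟩
      rw [Metric.mem_ball, dist_zero_right]
      linarith
    have := Complex.norm_le_of_forall_mem_frontier_norm_le hUb hdiffcl hfront hμU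
    rwa [norm_resCLM] at this

end Resolvent

theorem block_comparison_H_matrix_implies_hurwitz {nb : ℕ} (k : Fin nb → ℕ)
    (A : Matrix ((i : Fin nb) × Fin (k i)) ((i : Fin nb) × Fin (k i)) ℝ)
    -- the diagonal blocks `A_{ii}`
    (Ablk : ∀ i j : Fin nb, Matrix (Fin (k i)) (Fin (k j)) ℝ)
    (hblk : ∀ (i j : Fin nb) (x : Fin (k i)) (y : Fin (k j)),
      Ablk i j x y = A ⟨i, x⟩ ⟨j, y⟩)
    -- each diagonal block is Hurwitz and nonsingular
    (hAiiHurwitz : ∀ i, IsHurwitz (Ablk i i))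
    (hAiiNonsing : ∀ i, (Ablk i i).det ≠ 0)
    -- the resolvent norm over the imaginary axis peaks at `s = 0`:
    -- `‖(sI − A_{ii})⁻¹‖_{H∞} = ‖A_{ii}⁻¹‖₂`
    (hpeak : ∀ i, hinfNorm (fun ω =>
        (((ω : ℂ) * Complex.I) • (1 : Matrix (Fin (k i)) (Fin (k i)) ℂ)
          - (Ablk i i).map (algebraMap ℝ ℂ))⁻¹)
      = specNorm (((Ablk i i).map (algebraMap ℝ ℂ))⁻¹))
    -- scaled block diagonal dominance of the block comparison matrix:
    -- `∃ d ≫ 0` with `‖A_{ii}⁻¹‖₂⁻¹ d_i > Σ_{j≠i} ‖A_{ij}‖₂ d_j`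
    (d : Fin nb → ℝ) (hd : ∀ i, 0 < d i)
    (hdd : ∀ i, ∑ j ∈ Finset.univ.erase i,
        specNorm ((Ablk i j).map (algebraMap ℝ ℂ)) * d j
      < (specNorm (((Ablk i i).map (algebraMap ℝ ℂ))⁻¹))⁻¹ * d i) :
    IsHurwitz A := by
  classical
  intro μ hμspec
  by_contra hcon
  push_neg at hcon
  -- notation
  set Amap := A.map (algebraMap ℝ ℂ) with hAmap
  set Mi : ∀ i, Matrix (Fin (k i)) (Fin (k i)) ℂ :=
    fun i => (Ablk i i).map (algebraMap ℝ ℂ) with hMi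
  set Off : ∀ i j, Matrix (Fin (k i)) (Fin (k j)) ℂ :=
    fun i j => (Ablk i j).map (algebraMap ℝ ℂ) with hOff
  -- eigenvector
  have hnu : ¬IsUnit (algebraMap ℂ (Matrix _ _ ℂ) μ - Amap) := spectrum.mem_iff.1 hμspec
  have hdet0 : (μ • (1 : Matrix _ _ ℂ) - Amap).det = 0 := by
    by_contra hne
    refine hnu ?_
    rw [Algebra.algebraMap_eq_smul_one]
    exact (Matrix.isUnit_iff_isUnit_det _).2 (isUnit_iff_ne_zero.2 hne)
  obtain ⟨v, hv0, hveq⟩ := Matrix.exists_mulVec_eq_zero_iff.2 hdet0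
  have heig : μ • v = Amap *ᵥ v := by
    have h1 : (μ • (1 : Matrix _ _ ℂ) - Amap) *ᵥ v = μ • v - Amap *ᵥ v := by
      rw [Matrix.sub_mulVec, Matrix.smul_mulVec, Matrix.one_mulVec]
    rw [h1] at hveq
    exact sub_eq_zero.1 hveq
  -- blocks of the eigenvector
  set vb : ∀ i, Fin (k i) → ℂ := fun i x => v ⟨i, x⟩ with hvb
  set N : Fin nb → ℝ := fun i => eunorm (vb i) with hN
  -- the block equations
  have hblkmap : ∀ (i j : Fin nb) (x : Fin (k i)) (y : Fin (k j)),
      Off i j x y = Amap ⟨i, x⟩ ⟨j, y⟩ := by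
    intro i j x y
    simp [hOff, hAmap, Matrix.map_apply, hblk]
  have blockEq : ∀ i, (μ • (1 : Matrix (Fin (k i)) (Fin (k i)) ℂ) - Mi i) *ᵥ vb i
      = ∑ j ∈ Finset.univ.erase i, Off i j *ᵥ vb j := by
    intro i
    funext x
    have h1 : ((μ • (1 : Matrix (Fin (k i)) (Fin (k i)) ℂ) - Mi i) *ᵥ vb i) x
        = μ * vb i x - (Mi i *ᵥ vb i) x := by
      rw [Matrix.sub_mulVec, Matrix.smul_mulVec, Matrix.one_mulVec]
      simp [smul_eq_mul]
    have h2 : μ * vb i x = ∑ j : Fin nb, (Off i j *ᵥ vb j) x := by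
      have h3 : μ * vb i x = (Amap *ᵥ v) ⟨i, x⟩ := by
        have := congrFun heig ⟨i, x⟩
        simpa [smul_eq_mul] using this
      rw [h3]
      have h4 : (Amap *ᵥ v) ⟨i, x⟩ = ∑ p : (i : Fin nb) × Fin (k i), Amap ⟨i, x⟩ p * v p := by
        simp [Matrix.mulVec, dotProduct]
      rw [h4, ← Finset.univ_sigma_univ, Finset.sum_sigma]
      refine Finset.sum_congr rfl fun j _ => ?_
      simp only [Matrix.mulVec, dotProduct]
      refine Finset.sum_congr rfl fun y _ => ?_
      rw [hblkmap i j x y]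
    have h5 : ∑ j ∈ Finset.univ.erase i, (Off i j *ᵥ vb j) x
        = (∑ j : Fin nb, (Off i j *ᵥ vb j) x) - (Off i i *ᵥ vb i) x := by
      rw [eq_sub_iff_add_eq, Finset.sum_erase_add _ _ (Finset.mem_univ i)]
    have h6 : (Off i i *ᵥ vb i) x = (Mi i *ᵥ vb i) x := rfl
    rw [h1, h2, Finset.sum_apply, h5, h6]
  -- stability of diagonal blocks on the closed right half-plane
  have hMi_stab : ∀ i (s : ℂ), 0 ≤ s.re →
      (s • (1 : Matrix (Fin (k i)) (Fin (k i)) ℂ) - Mi i).det ≠ 0 := by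
    intro i s hs hdet
    have hmem : s ∈ spectrum ℂ (Mi i) := by
      rw [spectrum.mem_iff, Algebra.algebraMap_eq_smul_one]
      intro hunit
      exact (isUnit_iff_ne_zero.1 ((Matrix.isUnit_iff_isUnit_det _).1 hunit)) hdet
    exact absurd (hAiiHurwitz i s hmem) (not_lt.2 hs)
  -- positivity of the diagonal resolvent norms
  have hsn_pos : ∀ i, 0 < specNorm (Mi i)⁻¹ := by
    intro i
    have hsum : (0:ℝ) ≤ ∑ j ∈ Finset.univ.erase i, specNorm (Off i j) * d j :=
      Finset.sum_nonneg fun j _ => mul_nonneg (specNorm_nonneg _) (le_of_lt (hd j))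
    have h := hdd i
    rw [← inv_pos]
    by_contra hle
    push_neg at hle
    have : (specNorm (Mi i)⁻¹)⁻¹ * d i ≤ 0 :=
      mul_nonpos_of_nonpos_of_nonneg hle (le_of_lt (hd i))
    exact absurd (lt_of_le_of_lt hsum h) (not_lt.2 this)
  -- the resolvent bound at μ
  have hres : ∀ i, specNorm ((μ • (1 : Matrix (Fin (k i)) (Fin (k i)) ℂ) - Mi i)⁻¹)
      ≤ specNorm (Mi i)⁻¹ :=
    fun i => resolvent_bound (Mi i) (hMi_stab i) (hsn_pos i) (hpeak i) hcon
  -- the norm inequality for each block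
  have hNle : ∀ i, N i ≤ specNorm (Mi i)⁻¹
      * ∑ j ∈ Finset.univ.erase i, specNorm (Off i j) * N j := by
    intro i
    set B := μ • (1 : Matrix (Fin (k i)) (Fin (k i)) ℂ) - Mi i with hB
    have hu : IsUnit B.det := isUnit_iff_ne_zero.2 (hMi_stab i μ hcon)
    have hvbi : vb i = B⁻¹ *ᵥ (∑ j ∈ Finset.univ.erase i, Off i j *ᵥ vb j) := by
      rw [← blockEq i, Matrix.mulVec_mulVec, Matrix.nonsing_inv_mul _ hu, Matrix.one_mulVec]
    have step1 : N i ≤ specNorm B⁻¹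
        * eunorm (∑ j ∈ Finset.univ.erase i, Off i j *ᵥ vb j) := by
      rw [hN]
      simp only
      rw [hvbi]
      exact eunorm_mulVec_le _ _
    have step2 : eunorm (∑ j ∈ Finset.univ.erase i, Off i j *ᵥ vb j)
        ≤ ∑ j ∈ Finset.univ.erase i, specNorm (Off i j) * N j := by
      refine le_trans (eunorm_sum_le _ _) ?_
      exact Finset.sum_le_sum fun j _ => eunorm_mulVec_le _ _
    have hsum_nonneg : (0:ℝ) ≤ ∑ j ∈ Finset.univ.erase i, specNorm (Off i j) * N j :=
      Finset.sum_nonneg fun j _ => mul_nonneg (specNorm_nonneg _) (eunorm_nonneg _)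
    calc N i ≤ specNorm B⁻¹ * eunorm (∑ j ∈ Finset.univ.erase i, Off i j *ᵥ vb j) := step1
      _ ≤ specNorm B⁻¹ * ∑ j ∈ Finset.univ.erase i, specNorm (Off i j) * N j :=
          mul_le_mul_of_nonneg_left step2 (specNorm_nonneg _)
      _ ≤ specNorm (Mi i)⁻¹ * ∑ j ∈ Finset.univ.erase i, specNorm (Off i j) * N j :=
          mul_le_mul_of_nonneg_right (hres i) hsum_nonneg
  -- pick the index maximizing N i / d i
  obtain ⟨p0, hp0⟩ : ∃ p, v p ≠ 0 := by
    by_contra hall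
    push_neg at hall
    exact hv0 (funext hall)
  obtain ⟨i, -, hmax⟩ := Finset.exists_max_image Finset.univ (fun i => N i / d i)
    ⟨p0.1, Finset.mem_univ _⟩
  set c : ℝ := N i / d i with hc
  have hNp0 : 0 < N p0.1 := by
    refine eunorm_pos ?_
    intro hzero
    apply hp0
    have := congrFun hzero p0.2
    simpa [hvb, Sigma.eta] using this
  have hcpos : 0 < c := by
    have h1 : N p0.1 / d p0.1 ≤ c := hmax p0.1 (Finset.mem_univ _)
    exact lt_of_lt_of_le (div_pos hNp0 (hd p0.1)) h1
  have hNj : ∀ j, N j ≤ c * d j := by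
    intro j
    have h1 : N j / d j ≤ c := hmax j (Finset.mem_univ _)
    rw [div_le_iff₀ (hd j)] at h1
    linarith [h1]
  have hNi : N i = c * d i := by
    rw [hc, div_mul_cancel₀ _ (ne_of_gt (hd i))]
  have hsni : 0 < specNorm (Mi i)⁻¹ := hsn_pos i
  -- the contradiction
  have hchain : N i < c * d i := by
    calc N i ≤ specNorm (Mi i)⁻¹ * ∑ j ∈ Finset.univ.erase i, specNorm (Off i j) * N j :=
        hNle i
      _ ≤ specNorm (Mi i)⁻¹ * ∑ j ∈ Finset.univ.erase i, specNorm (Off i j) * (c * d j) := by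
        refine mul_le_mul_of_nonneg_left ?_ (le_of_lt hsni)
        exact Finset.sum_le_sum fun j _ =>
          mul_le_mul_of_nonneg_left (hNj j) (specNorm_nonneg _)
      _ = specNorm (Mi i)⁻¹ * (c * ∑ j ∈ Finset.univ.erase i, specNorm (Off i j) * d j) := by
        have hsum : ∑ j ∈ Finset.univ.erase i, specNorm (Off i j) * (c * d j)
            = c * ∑ j ∈ Finset.univ.erase i, specNorm (Off i j) * d j := by
          rw [Finset.mul_sum]
          exact Finset.sum_congr rfl fun j _ => by ring
        rw [hsum]
      _ < specNorm (Mi i)⁻¹ * (c * ((specNorm (Mi i)⁻¹)⁻¹ * d i)) := by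
        refine mul_lt_mul_of_pos_left ?_ hsni
        exact mul_lt_mul_of_pos_left (hdd i) hcpos
      _ = c * d i := by
        have hx : specNorm (Mi i)⁻¹ ≠ 0 := ne_of_gt hsni
        generalize hxx : specNorm (Mi i)⁻¹ = x at hx ⊢
        field_simp
  rw [hNi] at hchain
  exact lt_irrefl _ hchain
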